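/- Let H be a complex Hilbert space and let T be a bounded linear operator on H. Then the range of T equals the range of (T∘T*)^{1/2}, the positive square root of T∘T*. -/

import Mathlib

open ContinuousLinearMap

variable {H : Type*} [NormedAddCommGroup H] [InnerProductSpace ℂ H] [CompleteSpace H]

local notation "⟪" x ", " y "⟫" => @inner ℂ _ _ x y

/-- Douglas-type criterion: if `⟪y, x⟫` is bounded by `c * ‖A* x‖`, then `y` is in the
range of `A`. -/
theorem mem_range_of_inner_bound (A : H →L[ℂ] H) (y : H) (c : ℝ)
    (h : ∀ x : H, ‖⟪y, x⟫‖ ≤ c * ‖adjoint A x‖) : y ∈ Set.range ⇑A := by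
  set B : H →ₗ[ℂ] H := (adjoint A : H →L[ℂ] H).toLinearMap with hB
  have hker : LinearMap.ker B ≤ LinearMap.ker ((innerSL ℂ y : H →L[ℂ] ℂ).toLinearMap) := by
    intro x hx
    have hx' : adjoint A x = 0 := hx
    have := h x
    rw [hx', norm_zero, mul_zero] at this
    simpa using norm_le_zero_iff.mp this
  set f₀ : (H ⧸ LinearMap.ker B) →ₗ[ℂ] ℂ :=
    (LinearMap.ker B).liftQ ((innerSL ℂ y : H →L[ℂ] ℂ).toLinearMap) hker with hf₀
  set fK : LinearMap.range B →ₗ[ℂ] ℂ := f₀ ∘ₗ (B.quotKerEquivRange.symm : LinearMap.range B →ₗ[ℂ] (H ⧸ LinearMap.ker B)) with hfK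
  have key : ∀ x : H, fK ⟨B x, LinearMap.mem_range_self B x⟩ = ⟪y, x⟫ := by
    intro x
    simp only [hfK, LinearMap.comp_apply, LinearEquiv.coe_coe]
    rw [B.quotKerEquivRange_symm_apply_image x (LinearMap.mem_range_self B x)]
    simp [hf₀, Submodule.mkQ_apply, Submodule.liftQ_apply]
  have hbound : ∀ w : LinearMap.range B, ‖fK w‖ ≤ c * ‖w‖ := by
    rintro ⟨w, hw⟩
    obtain ⟨x, rfl⟩ := hw
    have := key x
    rw [show (⟨B x, LinearMap.mem_range_self B x⟩ : LinearMap.range B) = ⟨B x, ⟨x, rfl⟩⟩ from rfl] at this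
    rw [this]
    simpa [hB] using h x
  set fC : (LinearMap.range B : Submodule ℂ H) →L[ℂ] ℂ := fK.mkContinuous c hbound with hfC
  obtain ⟨g, hg, -⟩ := exists_extension_norm_eq (LinearMap.range B) fC
  set z : H := (InnerProductSpace.toDual ℂ H).symm g with hz
  have key2 : ∀ x : H, ⟪z, adjoint A x⟫ = ⟪y, x⟫ := by
    intro x
    have h1 : ⟪z, adjoint A x⟫ = g (adjoint A x) := InnerProductSpace.toDual_symm_apply
    rw [h1]
    have h2 : g (adjoint A x) = fC ⟨B x, LinearMap.mem_range_self B x⟩ :=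
      hg ⟨B x, LinearMap.mem_range_self B x⟩
    rw [h2]
    exact key x
  refine ⟨z, ?_⟩
  apply ext_inner_right ℂ
  intro x
  rw [← adjoint_inner_right A z x]
  exact key2 x

/-- The range of `T` equals the range of `(T T*)^{1/2}`. -/
theorem range_eq_range_sqrt (T S : H →L[ℂ] H)
    (hS : S.IsPositive) (hS2 : S ∘L S = T ∘L adjoint T) :
    Set.range ⇑T = Set.range ⇑S := by
  have hSa : adjoint S = S := hS.isSelfAdjoint.adjoint_eq
  have hnorm : ∀ x : H, ‖S x‖ = ‖adjoint T x‖ := by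
    intro x
    have hc : S (S x) = T (adjoint T x) := by
      have := ContinuousLinearMap.ext_iff.mp hS2 x
      simpa using this
    have h1 : (⟪S x, S x⟫ : ℂ) = ⟪adjoint T x, adjoint T x⟫ := by
      calc (⟪S x, S x⟫ : ℂ) = ⟪adjoint S x, S x⟫ := by rw [hSa]
        _ = ⟪x, S (S x)⟫ := adjoint_inner_left S (S x) x
        _ = ⟪x, T (adjoint T x)⟫ := by rw [hc]
        _ = ⟪adjoint T x, adjoint T x⟫ := (adjoint_inner_left T (adjoint T x) x).symm
    have h2 : ‖S x‖ ^ 2 = ‖adjoint T x‖ ^ 2 := by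
      have h1' := h1
      rw [inner_self_eq_norm_sq_to_K, inner_self_eq_norm_sq_to_K] at h1'
      exact_mod_cast h1'
    calc ‖S x‖ = Real.sqrt (‖S x‖ ^ 2) := (Real.sqrt_sq (norm_nonneg _)).symm
      _ = Real.sqrt (‖adjoint T x‖ ^ 2) := by rw [h2]
      _ = ‖adjoint T x‖ := Real.sqrt_sq (norm_nonneg _)
  apply Set.eq_of_subset_of_subset
  · rintro _ ⟨u, rfl⟩
    apply mem_range_of_inner_bound S (T u) ‖u‖
    intro x
    rw [hSa]
    calc ‖(⟪T u, x⟫ : ℂ)‖ = ‖(⟪u, adjoint T x⟫ : ℂ)‖ := by rw [adjoint_inner_right]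
      _ ≤ ‖u‖ * ‖adjoint T x‖ := norm_inner_le_norm _ _
      _ = ‖u‖ * ‖S x‖ := by rw [hnorm]
  · rintro _ ⟨u, rfl⟩
    apply mem_range_of_inner_bound T (S u) ‖u‖
    intro x
    calc ‖(⟪S u, x⟫ : ℂ)‖ = ‖(⟪adjoint S u, x⟫ : ℂ)‖ := by rw [hSa]
      _ = ‖(⟪u, S x⟫ : ℂ)‖ := by rw [adjoint_inner_left]
      _ ≤ ‖u‖ * ‖S x‖ := norm_inner_le_norm _ _
      _ = ‖u‖ * ‖adjoint T x‖ := by rw [hnorm]
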